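/- Intertwining yields the inverse: let C* : ℝ → L(H, ℂ²) be differentiable in operator norm and satisfy (C*)'(x) = σ₁⁻¹∘(σ₂∘C*(x)∘A + γ*(x)∘C*(x)) for all x, assume C*(x)∘B(x) = C(x)∘X(x)⁻¹∘B(x) for all x (as maps ℂ² → ℂ²), and assume C*(0)∘X(0) = C(0). Then, in the bounded vessel setting, C*(x)∘X(x) = C(x) for all x ∈ ℝ. -/

import Mathlib

open ContinuousLinearMap

private theorem hasDerivAt_clm_comp'' {E F G : Type*} [NormedAddCommGroup E] [NormedSpace ℂ E]
    [NormedAddCommGroup F] [NormedSpace ℂ F] [NormedAddCommGroup G] [NormedSpace ℂ G]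
    {c : ℝ → F →L[ℂ] G} {c' : F →L[ℂ] G} {d : ℝ → E →L[ℂ] F} {d' : E →L[ℂ] F} {x : ℝ}
    (hc : HasDerivAt c c' x) (hd : HasDerivAt d d' x) :
    HasDerivAt (fun y => c y ∘L d y) (c' ∘L d x + c x ∘L d') x := by
  have hbil := (isBoundedBilinearMap_comp (𝕜 := ℂ) (E := E) (F := F) (G := G)).hasFDerivAt
    (c x, d x)
  have h := (hbil.restrictScalars ℝ).comp_hasDerivAt x ((hc.prodMk hd) :
    HasDerivAt (fun y => (c y, d y)) (c', d') x)
  refine h.congr_deriv ?_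
  simp only [ContinuousLinearMap.coe_restrictScalars']
  rw [IsBoundedBilinearMap.deriv_apply]
  simp [add_comm]

/-- The linkage matrix `γ*(x) = γ + σ₂ C X⁻¹ B σ₁ - σ₁ C X⁻¹ B σ₂`. -/
noncomputable def gammaStar {H : Type*} [NormedAddCommGroup H] [NormedSpace ℂ H]
    (σ₁ σ₂ γ : (Fin 2 → ℂ) →L[ℂ] (Fin 2 → ℂ))
    (B : ℝ → ((Fin 2 → ℂ) →L[ℂ] H)) (C : ℝ → (H →L[ℂ] (Fin 2 → ℂ)))
    (Xinv : ℝ → (H →L[ℂ] H)) (x : ℝ) : (Fin 2 → ℂ) →L[ℂ] (Fin 2 → ℂ) :=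
  γ + σ₂ ∘L (((C x ∘L Xinv x) ∘L B x) ∘L σ₁) - σ₁ ∘L (((C x ∘L Xinv x) ∘L B x) ∘L σ₂)

set_option maxHeartbeats 1000000 in
/-- **Intertwining yields the inverse:** if `C*` satisfies
`(C*)' = σ₁⁻¹ (σ₂ C* A + γ* C*)`, `C* B = C X⁻¹ B` for all `x`, and
`C*(0) X(0) = C(0)`, then `C*(x) X(x) = C(x)` for all `x`. -/
theorem intertwining_yields_inverse
    {H : Type*} [NormedAddCommGroup H] [InnerProductSpace ℂ H] [CompleteSpace H]
    (σ₁ σ₁inv σ₂ γ : (Fin 2 → ℂ) →L[ℂ] (Fin 2 → ℂ))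
    (hσ₁ : σ₁ ∘L σ₁inv = 1) (hσ₁inv : σ₁inv ∘L σ₁ = 1)
    (A Aζ : H →L[ℂ] H)
    (B : ℝ → ((Fin 2 → ℂ) →L[ℂ] H))
    (C : ℝ → (H →L[ℂ] (Fin 2 → ℂ)))
    (X Xinv : ℝ → (H →L[ℂ] H))
    (hXinv : ∀ x : ℝ, X x ∘L Xinv x = 1) (hXinv' : ∀ x : ℝ, Xinv x ∘L X x = 1)
    (hB : ∀ x : ℝ, HasDerivAt B ((-((A ∘L B x) ∘L σ₂ + B x ∘L γ)) ∘L σ₁inv) x)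
    (hC : ∀ x : ℝ, HasDerivAt C (σ₁inv ∘L (-(σ₂ ∘L (C x ∘L Aζ)) + γ ∘L C x)) x)
    (hX : ∀ x : ℝ, HasDerivAt X ((B x ∘L σ₂) ∘L C x) x)
    (hLyap : ∀ x : ℝ, A ∘L X x + X x ∘L Aζ + (B x ∘L σ₁) ∘L C x = 0)
    (Cst : ℝ → (H →L[ℂ] (Fin 2 → ℂ)))
    (hCst : ∀ x : ℝ, HasDerivAt Cst
      (σ₁inv ∘L (σ₂ ∘L (Cst x ∘L A) + gammaStar σ₁ σ₂ γ B C Xinv x ∘L Cst x)) x)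
    (hCstB : ∀ x : ℝ, Cst x ∘L B x = (C x ∘L Xinv x) ∘L B x)
    (hCst0 : Cst 0 ∘L X 0 = C 0) :
    ∀ x : ℝ, Cst x ∘L X x = C x := by
  -- the difference function
  set D : ℝ → (H →L[ℂ] (Fin 2 → ℂ)) := fun t => Cst t ∘L X t - C t with hDdef
  -- its derivative
  have hD' : ∀ t : ℝ, HasDerivAt D
      (σ₁inv ∘L (-(σ₂ ∘L (D t ∘L Aζ)) + gammaStar σ₁ σ₂ γ B C Xinv t ∘L D t)) t := by
    intro t
    have h1 := (hasDerivAt_clm_comp'' (hCst t) (hX t)).sub (hC t)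
    refine h1.congr_deriv ?_
    have hAXv : ∀ v : H, A (X t v) = -(X t (Aζ v) + B t (σ₁ (C t v))) := by
      intro v
      have h := ContinuousLinearMap.ext_iff.mp (hLyap t) v
      simp only [add_apply, comp_apply, coe_comp', Function.comp_apply, zero_apply] at h
      rw [add_assoc] at h
      exact eq_neg_of_add_eq_zero_left h
    have hCstBv : ∀ v : Fin 2 → ℂ, Cst t (B t v) = C t (Xinv t (B t v)) := by
      intro v
      have h := ContinuousLinearMap.ext_iff.mp (hCstB t) v
      simpa using h
    have hσv : ∀ w : Fin 2 → ℂ, σ₁inv (σ₁ w) = w := by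
      intro w
      have h := ContinuousLinearMap.ext_iff.mp hσ₁inv w
      simpa using h
    ext v
    simp only [hDdef, gammaStar, coe_comp', Function.comp_apply, add_apply, sub_apply,
      comp_apply, neg_apply, map_add, map_sub, map_neg]
    simp only [hAXv, hCstBv, hσv, map_add, map_sub, map_neg, Pi.add_apply, Pi.sub_apply,
      Pi.neg_apply, Pi.smul_apply]
    abel
  have hD0 : D 0 = 0 := by simp [hDdef, hCst0]
  -- continuity facts
  have hXcont : Continuous X := continuous_iff_continuousAt.mpr fun t => (hX t).continuousAt
  have hBcont : Continuous B := continuous_iff_continuousAt.mpr fun t => (hB t).continuousAt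
  have hCcont : Continuous C := continuous_iff_continuousAt.mpr fun t => (hC t).continuousAt
  have hDcont : Continuous D := continuous_iff_continuousAt.mpr fun t => (hD' t).continuousAt
  have hXinvcont : Continuous Xinv := by
    have hXinveq : ∀ t : ℝ, Xinv t = Ring.inverse (X t) := by
      intro t
      have : Ring.inverse ((⟨X t, Xinv t, hXinv t, hXinv' t⟩ : (H →L[ℂ] H)ˣ) : H →L[ℂ] H)
          = Xinv t := Ring.inverse_unit _
      simpa using this.symm
    rw [continuous_iff_continuousAt]
    intro t
    rw [continuousAt_congr (by filter_upwards with s using (hXinveq s) : Xinv =ᶠ[nhds t] _)]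
    have h1 : ContinuousAt (Ring.inverse : (H →L[ℂ] H) → (H →L[ℂ] H)) (X t) :=
      NormedRing.inverse_continuousAt (⟨X t, Xinv t, hXinv t, hXinv' t⟩ : (H →L[ℂ] H)ˣ)
    exact h1.comp hXcont.continuousAt
  have hGcont : Continuous (gammaStar σ₁ σ₂ γ B C Xinv) := by
    unfold gammaStar
    exact (continuous_const.add (continuous_const.clm_comp
      (((hCcont.clm_comp hXinvcont).clm_comp hBcont).clm_comp continuous_const))).sub
      (continuous_const.clm_comp
      (((hCcont.clm_comp hXinvcont).clm_comp hBcont).clm_comp continuous_const))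
  -- uniqueness of the ODE solution on a compact interval
  intro x
  rw [← sub_eq_zero]
  show D x = 0
  set a : ℝ := -(|x| + 1) with ha
  set b : ℝ := |x| + 1 with hb
  have hxab : x ∈ Set.Icc a b := by
    constructor
    · rw [ha]; have := abs_nonneg x; nlinarith [neg_abs_le x]
    · rw [hb]; nlinarith [le_abs_self x]
  have h0ab : (0 : ℝ) ∈ Set.Ioo a b := by
    constructor
    · rw [ha]; nlinarith [abs_nonneg x]
    · rw [hb]; nlinarith [abs_nonneg x]
  -- clamp function
  set φ : ℝ → ℝ := fun t => min (max t a) b with hφ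
  have hφmem : ∀ t, φ t ∈ Set.Icc a b := by
    intro t
    refine ⟨le_min (le_max_right _ _) ?_, min_le_right _ _⟩
    rw [ha, hb]; nlinarith [abs_nonneg x]
  have hφid : ∀ t ∈ Set.Icc a b, φ t = t := by
    intro t ht
    rw [hφ]
    simp only [max_eq_left ht.1, min_eq_left ht.2]
  -- bound for gammaStar on the compact interval
  obtain ⟨M, hM⟩ := (isCompact_Icc (a := a) (b := b)).exists_bound_of_continuousOn
    hGcont.continuousOn
  set K : ℝ := ‖σ₁inv‖ * (‖σ₂‖ * ‖Aζ‖ + max M 0) with hK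
  have hK0 : 0 ≤ K := by
    apply mul_nonneg (norm_nonneg _)
    positivity
  -- the ODE field
  set v : ℝ → (H →L[ℂ] (Fin 2 → ℂ)) → (H →L[ℂ] (Fin 2 → ℂ)) := fun t y =>
    σ₁inv ∘L (-(σ₂ ∘L (y ∘L Aζ)) + gammaStar σ₁ σ₂ γ B C Xinv (φ t) ∘L y) with hv
  have hvnorm : ∀ t y, ‖v t y‖ ≤ K * ‖y‖ := by
    intro t y
    have hγ : ‖gammaStar σ₁ σ₂ γ B C Xinv (φ t)‖ ≤ max M 0 :=
      le_trans (hM _ (hφmem t)) (le_max_left _ _)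
    calc ‖v t y‖ ≤ ‖σ₁inv‖ * ‖-(σ₂ ∘L (y ∘L Aζ)) + gammaStar σ₁ σ₂ γ B C Xinv (φ t) ∘L y‖ :=
          opNorm_comp_le _ _
      _ ≤ ‖σ₁inv‖ * (‖σ₂ ∘L (y ∘L Aζ)‖ + ‖gammaStar σ₁ σ₂ γ B C Xinv (φ t) ∘L y‖) := by
          gcongr
          exact (norm_add_le _ _).trans (by rw [norm_neg])
      _ ≤ ‖σ₁inv‖ * (‖σ₂‖ * (‖y‖ * ‖Aζ‖) + max M 0 * ‖y‖) := by
          gcongr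
          · exact (opNorm_comp_le _ _).trans (by gcongr; exact opNorm_comp_le _ _)
          · exact (opNorm_comp_le _ _).trans (by gcongr)
      _ = K * ‖y‖ := by rw [hK]; ring
  have hvlin : ∀ t y z, v t y - v t z = v t (y - z) := by
    intro t y z
    ext w
    simp only [hv, coe_comp', Function.comp_apply, add_apply, sub_apply, neg_apply,
      comp_apply, map_sub, map_add, map_neg, Pi.add_apply, Pi.sub_apply, Pi.neg_apply]
    abel
  have hvlip : ∀ t, LipschitzOnWith K.toNNReal (v t) Set.univ := by
    intro t
    apply LipschitzWith.lipschitzOnWith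
    apply LipschitzWith.of_dist_le_mul
    intro y z
    rw [dist_eq_norm, dist_eq_norm, hvlin t y z]
    calc ‖v t (y - z)‖ ≤ K * ‖y - z‖ := hvnorm t _
      _ = ↑K.toNNReal * ‖y - z‖ := by rw [Real.coe_toNNReal _ hK0]
  have hv0 : ∀ t, v t 0 = 0 := by
    intro t
    rw [hv]
    simp
  -- apply uniqueness
  have := ODE_solution_unique_of_mem_Icc (v := v) (s := fun _ => Set.univ) (fun t _ => hvlip t) h0ab
    (f := D) (g := fun _ => 0)
    hDcont.continuousOn
    (fun t ht => by
      have h := hD' t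
      rwa [show gammaStar σ₁ σ₂ γ B C Xinv t = gammaStar σ₁ σ₂ γ B C Xinv (φ t) from by
        rw [hφid t (Set.mem_Icc_of_Ioo ht)]] at h)
    (fun _ _ => Set.mem_univ _)
    continuousOn_const
    (fun t _ => by simpa [hv0 t] using hasDerivAt_const t (0 : H →L[ℂ] (Fin 2 → ℂ)))
    (fun _ _ => Set.mem_univ _)
    hD0
  exact this hxab
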